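/- A ring R is right coherent if and only if the flat-precover completing domain of every left R-module is closed under arbitrary direct products. -/

import Mathlib

open CategoryTheory

universe u

variable {R : Type u} [Ring R]

/-- The submodule of relations defining the balanced tensor product `W ⊗_R M` of a
right `R`-module `W` and a left `R`-module `M` as a quotient of `W ⊗_ℤ M`. -/
abbrev tensorRel (W : Type u) [AddCommGroup W] [Module Rᵐᵒᵖ W]
    (M : Type u) [AddCommGroup M] [Module R M] : Submodule ℤ (TensorProduct ℤ W M) :=
  Submodule.span ℤ
    {x | ∃ (w : W) (r : R) (m : M), x = (MulOpposite.op r • w) ⊗ₜ[ℤ] m - w ⊗ₜ[ℤ] (r • m)}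

/-- The balanced tensor product `W ⊗_R M` over the (possibly noncommutative) ring `R`. -/
abbrev RTensor (W : Type u) [AddCommGroup W] [Module Rᵐᵒᵖ W]
    (M : Type u) [AddCommGroup M] [Module R M] : Type u :=
  TensorProduct ℤ W M ⧸ tensorRel (R := R) W M

/-- The map `W ⊗_R M → K ⊗_R M` induced by a morphism `i : W → K` of right
`R`-modules. -/
noncomputable def tensorMap {W K : Type u} [AddCommGroup W] [Module Rᵐᵒᵖ W]
    [AddCommGroup K] [Module Rᵐᵒᵖ K] (i : W →ₗ[Rᵐᵒᵖ] K)
    (M : Type u) [AddCommGroup M] [Module R M] :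
    RTensor (R := R) W M →ₗ[ℤ] RTensor (R := R) K M :=
  Submodule.mapQ _ _ (LinearMap.rTensor M i.toAddMonoidHom.toIntLinearMap) (by
    refine Submodule.span_le.2 ?_
    rintro x ⟨w, r, m, rfl⟩
    refine Submodule.mem_comap.2 (Submodule.subset_span ?_)
    refine ⟨i w, r, m, ?_⟩
    erw [map_sub, LinearMap.rTensor_tmul, LinearMap.rTensor_tmul]
    simp [map_smul])

/-- `M` is a flat left `R`-module: tensoring with `M` preserves injectivity of
morphisms of right `R`-modules. -/
def IsFlat (M : Type u) [AddCommGroup M] [Module R M] : Prop :=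
  ∀ (W K : Type u) [AddCommGroup W] [Module Rᵐᵒᵖ W] [AddCommGroup K] [Module Rᵐᵒᵖ K]
    (i : W →ₗ[Rᵐᵒᵖ] K), Function.Injective i → Function.Injective (tensorMap (R := R) i M)

/-- `N` belongs to the flat-precover completing domain `𝔉⁻¹(M)` of `M`:
every morphism `M ⟶ N` factors through a flat module. -/
def FlatDom (M N : ModuleCat.{u} R) : Prop :=
  ∀ f : M ⟶ N, ∃ (F : ModuleCat.{u} R) (h : M ⟶ F) (k : F ⟶ N),
    IsFlat (R := R) ↥F ∧ h ≫ k = f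

/-- The map `W ⊗_R M → W ⊗_R N` induced by a morphism `g : M → N` of left `R`-modules. -/
noncomputable def tensorMapR {M N : Type u} [AddCommGroup M] [Module R M]
    [AddCommGroup N] [Module R N] (g : M →ₗ[R] N)
    (W : Type u) [AddCommGroup W] [Module Rᵐᵒᵖ W] :
    RTensor (R := R) W M →ₗ[ℤ] RTensor (R := R) W N :=
  Submodule.mapQ _ _ (LinearMap.lTensor W g.toAddMonoidHom.toIntLinearMap) (by
    refine Submodule.span_le.2 ?_
    rintro x ⟨w, r, m, rfl⟩
    refine Submodule.mem_comap.2 (Submodule.subset_span ?_)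
    refine ⟨w, r, g m, ?_⟩
    erw [map_sub, LinearMap.lTensor_tmul, LinearMap.lTensor_tmul]
    simp [map_smul])

lemma tensorMapR_retract {M N : Type u} [AddCommGroup M] [Module R M]
    [AddCommGroup N] [Module R N] (h : M →ₗ[R] N) (k : N →ₗ[R] M)
    (hk : ∀ m, k (h m) = m)
    (W : Type u) [AddCommGroup W] [Module Rᵐᵒᵖ W]
    (x : RTensor (R := R) W M) :
    tensorMapR (R := R) k W (tensorMapR (R := R) h W x) = x := by
  induction x using Submodule.Quotient.induction_on with
  | _ y =>
    erw [tensorMapR, tensorMapR, Submodule.mapQ_apply]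
    congr 1
    show (LinearMap.lTensor W k.toAddMonoidHom.toIntLinearMap) ((LinearMap.lTensor W h.toAddMonoidHom.toIntLinearMap) y) = y
    induction y with
    | zero => simp
    | add a b ha hb => simp [ha, hb]
    | tmul w m => simp [LinearMap.lTensor_tmul, hk]

lemma tensorMap_natural {W K : Type u} [AddCommGroup W] [Module Rᵐᵒᵖ W]
    [AddCommGroup K] [Module Rᵐᵒᵖ K] (i : W →ₗ[Rᵐᵒᵖ] K)
    {M N : Type u} [AddCommGroup M] [Module R M] [AddCommGroup N] [Module R N]
    (g : M →ₗ[R] N) (x : RTensor (R := R) W M) :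
    tensorMap (R := R) i N (tensorMapR (R := R) g W x) =
      tensorMapR (R := R) g K (tensorMap (R := R) i M x) := by
  induction x using Submodule.Quotient.induction_on with
  | _ y =>
    erw [tensorMapR, tensorMap, Submodule.mapQ_apply,
      tensorMapR, tensorMap, Submodule.mapQ_apply]
    congr 1
    show (LinearMap.rTensor N i.toAddMonoidHom.toIntLinearMap) ((LinearMap.lTensor W g.toAddMonoidHom.toIntLinearMap) y) = (LinearMap.lTensor K g.toAddMonoidHom.toIntLinearMap) ((LinearMap.rTensor M i.toAddMonoidHom.toIntLinearMap) y)
    induction y with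
    | zero => simp
    | add a b ha hb => simp [ha, hb]
    | tmul w m => simp [LinearMap.lTensor_tmul, LinearMap.rTensor_tmul]

theorem stmt_15 :
    (∀ (ι : Type u) (F : ι → ModuleCat.{u} R), (∀ i, IsFlat (R := R) ↥(F i)) →
        IsFlat (R := R) (∀ i, ↥(F i))) ↔
      ∀ (M : ModuleCat.{u} R) (ι : Type u) (N : ι → ModuleCat.{u} R),
        (∀ i, FlatDom M (N i)) → FlatDom M (ModuleCat.of R (∀ i, ↥(N i))) := by
  constructor
  · -- products of flats are flat → flat domains closed under products
    intro hyp M ι N hN f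
    choose F h k hF hfac using fun i =>
      hN i (f ≫ ModuleCat.ofHom (LinearMap.proj i : (∀ j, ↥(N j)) →ₗ[R] ↥(N i)))
    refine ⟨ModuleCat.of R (∀ i, ↥(F i)),
      ModuleCat.ofHom (LinearMap.pi (fun i => (h i).hom) : ↥M →ₗ[R] (∀ i, ↥(F i))),
      ModuleCat.ofHom (LinearMap.pi (fun i => (k i).hom.comp (LinearMap.proj i)) :
        (∀ i, ↥(F i)) →ₗ[R] (∀ i, ↥(N i))),
      hyp ι F hF, ?_⟩
    ext m i
    exact congrArg (fun g => g.hom m) (hfac i)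
  · -- flat domains closed under products → products of flats are flat
    intro hyp ι F hF
    set P : ModuleCat.{u} R := ModuleCat.of R (∀ i, ↥(F i)) with hP
    have hdom : ∀ i, FlatDom P (F i) := by
      intro i f
      exact ⟨F i, f, 𝟙 (F i), hF i, Category.comp_id f⟩
    obtain ⟨G, h, k, hG, hfac⟩ := hyp P ι F hdom (𝟙 P)
    have hk : ∀ m : ↥P, k.hom (h.hom m) = m := fun m => congrArg (fun g => g.hom m) hfac
    intro W K _ _ _ _ i hi
    intro x y hxy
    have h1 : tensorMap (R := R) i ↥G (tensorMapR (R := R) (h.hom : ↥P →ₗ[R] ↥G) W x) =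
        tensorMap (R := R) i ↥G (tensorMapR (R := R) (h.hom : ↥P →ₗ[R] ↥G) W y) := by
      rw [tensorMap_natural, tensorMap_natural]
      exact congrArg _ hxy
    have h2 := hG W K i hi h1
    calc x = tensorMapR (R := R) (k.hom : ↥G →ₗ[R] ↥P) W
            (tensorMapR (R := R) (h.hom : ↥P →ₗ[R] ↥G) W x) :=
          (tensorMapR_retract (R := R) h.hom k.hom hk W x).symm
      _ = tensorMapR (R := R) (k.hom : ↥G →ₗ[R] ↥P) W
            (tensorMapR (R := R) (h.hom : ↥P →ₗ[R] ↥G) W y) := by rw [h2]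
      _ = y := tensorMapR_retract (R := R) h.hom k.hom hk W y
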